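/- Let f : ℝ^N → ℝ^M be locally bounded and continuous at a point x ∈ ℝ^N. Then its Filippov set-valued map at x is the singleton F[f](x) = {f(x)}. -/

import Mathlib

open MeasureTheory Set
open scoped ENNReal

noncomputable def eBall {ι : Type*} [Fintype ι] (x : ι → ℝ) (δ : ℝ) : Set (ι → ℝ) :=
  {y | Real.sqrt (∑ i, (y i - x i) ^ 2) < δ}

noncomputable def filippov {ι κ : Type*} [Fintype ι] [Fintype κ]
    (h : (ι → ℝ) → (κ → ℝ)) (x : ι → ℝ) : Set (κ → ℝ) :=
  ⋂ (δ : ℝ) (_ : 0 < δ) (S : Set (ι → ℝ)) (_ : volume S = 0),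
    closure (convexHull ℝ (h '' (eBall x δ \ S)))

/-- A map between finite-dimensional real coordinate spaces is locally bounded. -/
def LocBounded {ι κ : Type*} [Fintype ι] [Fintype κ] (f : (ι → ℝ) → (κ → ℝ)) : Prop :=
  ∀ x : ι → ℝ, ∃ δ : ℝ, 0 < δ ∧ Bornology.IsBounded (f '' eBall x δ)

lemma isOpen_eBall' {ι : Type*} [Fintype ι] (x : ι → ℝ) (δ : ℝ) : IsOpen (eBall x δ) := by
  have h : Continuous fun y : ι → ℝ => Real.sqrt (∑ i, (y i - x i) ^ 2) := by
    apply Real.continuous_sqrt.comp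
    exact continuous_finset_sum _ fun i _ => ((continuous_apply i).sub continuous_const).pow 2
  exact h.isOpen_preimage (Set.Iio δ) isOpen_Iio

lemma mem_eBall_self' {ι : Type*} [Fintype ι] (x : ι → ℝ) {δ : ℝ} (hδ : 0 < δ) :
    x ∈ eBall x δ := by
  simp [eBall, hδ]

lemma eBall_subset_ball {ι : Type*} [Fintype ι] (x : ι → ℝ) {δ : ℝ} (hδ : 0 < δ) :
    eBall x δ ⊆ Metric.ball x δ := by
  intro y hy
  rw [Metric.mem_ball, dist_pi_lt_iff hδ]
  intro i
  have h1 : |y i - x i| ≤ Real.sqrt (∑ j, (y j - x j) ^ 2) := by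
    rw [← Real.sqrt_sq_eq_abs]
    exact Real.sqrt_le_sqrt
      (Finset.single_le_sum (f := fun j => (y j - x j) ^ 2) (fun j _ => sq_nonneg _) (Finset.mem_univ i))
  calc dist (y i) (x i) = |y i - x i| := Real.dist_eq _ _
    _ ≤ _ := h1
    _ < δ := hy

/-- **The Filippov set-valued map at a continuity point is a singleton.**
If `f : ℝ^N → ℝ^M` is locally bounded and continuous at `x`, then `F[f](x) = {f(x)}`. -/
theorem filippov_of_continuousAt {N M : ℕ}
    (f : (Fin N → ℝ) → (Fin M → ℝ)) (hf : LocBounded f)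
    (x : Fin N → ℝ) (hcont : ContinuousAt f x) :
    filippov f x = {f x} := by
  apply Set.Subset.antisymm
  · -- filippov f x ⊆ {f x}
    intro y hy
    rw [Set.mem_singleton_iff]
    apply eq_of_forall_dist_le
    intro ε hε
    obtain ⟨δ, hδ, hδε⟩ := Metric.continuousAt_iff.mp hcont ε hε
    have hmem : y ∈ closure (convexHull ℝ (f '' (eBall x δ \ (∅ : Set (Fin N → ℝ))))) := by
      simp only [filippov, Set.mem_iInter] at hy
      exact hy δ hδ ∅ (by simp)
    have hsub : f '' (eBall x δ \ (∅ : Set (Fin N → ℝ))) ⊆ Metric.closedBall (f x) ε := by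
      rintro _ ⟨z, ⟨hz, -⟩, rfl⟩
      exact Metric.mem_closedBall.mpr (le_of_lt (hδε (eBall_subset_ball x hδ hz)))
    have : closure (convexHull ℝ (f '' (eBall x δ \ (∅ : Set (Fin N → ℝ))))) ⊆
        Metric.closedBall (f x) ε :=
      closure_minimal (convexHull_min hsub (convex_closedBall _ _)) Metric.isClosed_closedBall
    exact Metric.mem_closedBall.mp (this hmem)
  · -- {f x} ⊆ filippov f x
    intro y hy
    rw [Set.mem_singleton_iff] at hy
    subst hy
    simp only [filippov, Set.mem_iInter]
    intro δ hδ S hS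
    apply closure_mono (Set.image_subset_iff.mpr (fun z hz =>
      Set.mem_preimage.mpr (subset_convexHull ℝ _ (Set.mem_image_of_mem f hz))))
    rw [mem_closure_iff_nhds]
    intro t ht
    have hU : f ⁻¹' t ∈ nhds x := hcont ht
    have hW : (f ⁻¹' t ∩ eBall x δ) ∈ nhds x :=
      Filter.inter_mem hU ((isOpen_eBall' x δ).mem_nhds (mem_eBall_self' x hδ))
    have hpos : 0 < volume (f ⁻¹' t ∩ eBall x δ) :=
      Measure.measure_pos_of_mem_nhds volume hW
    have hne : ((f ⁻¹' t ∩ eBall x δ) \ S).Nonempty := by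
      rw [Set.diff_nonempty]
      intro hsub
      exact absurd (le_antisymm (le_trans (measure_mono hsub) hS.le) zero_le)
        (ne_of_gt hpos)
    obtain ⟨z, ⟨hz1, hz2⟩, hz3⟩ := hne
    exact ⟨f z, hz1, z, ⟨hz2, hz3⟩, rfl⟩
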